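/- Let (G, D) be a mixed graph on a vertex set V, and let k and ℓ be natural numbers. Assume that for every pair of vertices u, v ∈ V there exist m ≤ k and a D-walk of length m from u to v. On the set of D-walks of length ℓ, consider the equivalence relation where f ∼ g iff f = g, or every step of f is an edge of G and g is the reverse of f; let adjacency between equivalence classes C and C' mean that there exist f ∈ C and g ∈ C' with g a shift of f (g(i) = f(i+1) for all 0 ≤ i ≤ ℓ−1). Then for any two equivalence classes C and C' there exist m ≤ k + ℓ and a sequence of classes C = C₀, C₁, …, C_m = C' with C_j adjacent to C_{j+1} for each j < m. (This is the bound k_ℓ ≤ k + ℓ for the diameter of the ℓ-sequence mixed graph S^ℓ(G) of a mixed graph G of diameter k.) -/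

import Mathlib

/-- Let `(G, D)` be a mixed graph on `V` (`D` a digraph containing the simple graph `G`)
of diameter at most `k` (between every pair of vertices there is a `D`-walk of length
`m ≤ k`). The vertices of the `ℓ`-sequence mixed graph `S^ℓ(G)` are the equivalence
classes of `D`-walks of length `ℓ` under identifying each all-edge walk with its reverse,
and a class `C` is adjacent to a class `C'` when some `g ∈ C'` is a shift of some
`f ∈ C`. Then any two classes are joined by a sequence of at most `k + ℓ` adjacencies;
that is, the diameter of `S^ℓ(G)` is at most `k + ℓ`. -/
theorem sequence_mixed_graph_diameter_le {V : Type*}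
    (G : SimpleGraph V) (D : V → V → Prop)
    (hsub : ∀ u v : V, G.Adj u v → D u v) (k ℓ : ℕ)
    (hdiam : ∀ u v : V, ∃ m ≤ k, ∃ f : Fin (m + 1) → V,
      (∀ i : Fin m, D (f i.castSucc) (f i.succ)) ∧ f 0 = u ∧ f (Fin.last m) = v)
    (C C' : Quot (fun f g : {f : Fin (ℓ + 1) → V // ∀ i : Fin ℓ, D (f i.castSucc) (f i.succ)} =>
        f = g ∨ ((∀ i : Fin ℓ, G.Adj (f.1 i.castSucc) (f.1 i.succ)) ∧
          ∀ i : Fin (ℓ + 1), g.1 i = f.1 i.rev))) :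
    ∃ m ≤ k + ℓ, ∃ h : Fin (m + 1) →
        Quot (fun f g : {f : Fin (ℓ + 1) → V // ∀ i : Fin ℓ, D (f i.castSucc) (f i.succ)} =>
          f = g ∨ ((∀ i : Fin ℓ, G.Adj (f.1 i.castSucc) (f.1 i.succ)) ∧
            ∀ i : Fin (ℓ + 1), g.1 i = f.1 i.rev)),
      h 0 = C ∧ h (Fin.last m) = C' ∧
        ∀ j : Fin m, ∃ f g : {f : Fin (ℓ + 1) → V // ∀ i : Fin ℓ, D (f i.castSucc) (f i.succ)},
          Quot.mk _ f = h j.castSucc ∧ Quot.mk _ g = h j.succ ∧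
            ∀ i : Fin ℓ, g.1 i.castSucc = f.1 i.succ := by
  obtain ⟨fC, hfC⟩ := C.exists_rep
  obtain ⟨fC', hfC'⟩ := C'.exists_rep
  obtain ⟨m, hm, w, hw, hw0, hwl⟩ := hdiam (fC.1 (Fin.last ℓ)) (fC'.1 0)
  set W : ℕ → V := fun n =>
    if h : n ≤ ℓ then fC.1 ⟨n, by omega⟩
    else if h2 : n ≤ ℓ + m then w ⟨n - ℓ, by omega⟩
    else fC'.1 ⟨min (n - ℓ - m) ℓ, by omega⟩ with hWdef
  have hA : ∀ n (h : n ≤ ℓ), W n = fC.1 ⟨n, by omega⟩ := fun n h => dif_pos h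
  have hB : ∀ n (h1 : ℓ ≤ n) (h2 : n ≤ ℓ + m), W n = w ⟨n - ℓ, by omega⟩ := by
    intro n h1 h2
    by_cases h : n ≤ ℓ
    · have hn : n = ℓ := le_antisymm h h1
      subst hn
      rw [hA n le_rfl]
      have : (⟨n - n, by omega⟩ : Fin (m + 1)) = 0 := by
        ext; simp
      rw [this, hw0]
      congr 1
    · simp only [hWdef]
      rw [dif_neg h, dif_pos h2]
  have hC : ∀ n (h1 : ℓ + m ≤ n) (h2 : n ≤ ℓ + m + ℓ),
      W n = fC'.1 ⟨n - ℓ - m, by omega⟩ := by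
    intro n h1 h2
    by_cases h : n ≤ ℓ + m
    · have hn : n = ℓ + m := le_antisymm h h1
      subst hn
      rw [hB (ℓ + m) (by omega) le_rfl]
      have h3 : (⟨ℓ + m - ℓ, by omega⟩ : Fin (m + 1)) = Fin.last m := by
        ext; simp
      rw [h3, hwl]
      have h4 : (⟨ℓ + m - ℓ - m, by omega⟩ : Fin (ℓ + 1)) = 0 := by ext; simp
      rw [h4]
    · simp only [hWdef]
      rw [dif_neg (by omega : ¬ n ≤ ℓ), dif_neg h]
      have h4 : (⟨min (n - ℓ - m) ℓ, by omega⟩ : Fin (ℓ + 1))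
          = ⟨n - ℓ - m, by omega⟩ := by
        ext; simp; omega
      rw [h4]
  have hstep : ∀ n, n < ℓ + m + ℓ → D (W n) (W (n + 1)) := by
    intro n hn
    rcases lt_or_ge n ℓ with h | h
    · rw [hA n (by omega), hA (n + 1) (by omega)]
      exact fC.2 ⟨n, h⟩
    rcases lt_or_ge n (ℓ + m) with h2 | h2
    · rw [hB n h (by omega), hB (n + 1) (by omega) (by omega)]
      have h3 : (⟨n + 1 - ℓ, by omega⟩ : Fin (m + 1)) = (⟨n - ℓ, by omega⟩ : Fin m).succ := by
        ext; simp; omega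
      rw [h3]
      exact hw ⟨n - ℓ, by omega⟩
    · rw [hC n h2 (by omega), hC (n + 1) (by omega) (by omega)]
      have h3 : (⟨n + 1 - ℓ - m, by omega⟩ : Fin (ℓ + 1))
          = (⟨n - ℓ - m, by omega⟩ : Fin ℓ).succ := by
        ext; simp; omega
      rw [h3]
      exact fC'.2 ⟨n - ℓ - m, by omega⟩
  refine ⟨m + ℓ, by omega, fun j => Quot.mk _ ⟨fun i => W (j.1 + i.1), fun i => by
      have := hstep (j.1 + i.1) (by have := j.2; have := i.2; omega)
      simpa [Nat.add_assoc] using this⟩, ?_, ?_, ?_⟩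
  · rw [← hfC]
    apply Quot.sound
    left
    refine Subtype.ext (funext fun i => ?_)
    simp only [Fin.val_zero, Nat.zero_add]
    rw [hA i.1 (by omega)]
  · rw [← hfC']
    apply Quot.sound
    left
    refine Subtype.ext (funext fun i => ?_)
    simp only [Fin.val_last]
    rw [hC (m + ℓ + i.1) (by omega) (by have := i.2; omega)]
    have h4 : (⟨m + ℓ + i.1 - ℓ - m, by omega⟩ : Fin (ℓ + 1)) = i := by
      ext; simp; omega
    rw [h4]
  · intro j
    refine ⟨⟨fun i => W (j.1 + i.1), fun i => by
        have := hstep (j.1 + i.1) (by have := j.2; have := i.2; omega)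
        simpa [Nat.add_assoc] using this⟩,
      ⟨fun i => W (j.1 + 1 + i.1), fun i => by
        have := hstep (j.1 + 1 + i.1) (by have := j.2; have := i.2; omega)
        simpa [Nat.add_assoc] using this⟩, rfl, rfl, fun i => ?_⟩
    simp only [Fin.coe_castSucc, Fin.val_succ]
    congr 1
    omega
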